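/- Let A be a geodesic in the hyperbolic plane H², let t > 0, and let C(t,A) = {w ∈ H² : d(w,A) = t} be a connected component of the hypercycle at distance t from A. If z₁ and z are two points on the same connected component of C(t,A), then the length of the arc of C(t,A) between z₁ and z (i.e. the distance in the induced path metric on C(t,A)) is at most 2·sinh(d(z₁,z)/2), where d is the hyperbolic distance. -/

import Mathlib

open Real

/-- Hyperbolic distance in the upper half-plane model `{z : ℂ | 0 < z.im}`,
via the standard identity `2·sinh(d(z,w)/2) = |z − w| / √(Im z · Im w)`. -/
noncomputable def hdist2 (z w : ℂ) : ℝ :=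
  2 * Real.arsinh (‖z - w‖ / (2 * Real.sqrt (z.im * w.im)))

lemma key_ineq (a b : ℝ) (ha : 0 < a) (hb : 0 < b) :
    |Real.log (b / a)| ≤ |a - b| / Real.sqrt (a * b) := by
  set x := Real.log (b / a) / 2 with hx
  have hlog : Real.log (b / a) = 2 * x := by rw [hx]; ring
  have hba : b = a * Real.exp (2 * x) := by
    have h : Real.exp (Real.log (b / a)) = b / a := Real.exp_log (div_pos hb ha)
    rw [← hlog, h]; field_simp
  have hsq : Real.sqrt (a * b) = a * Real.exp x := by
    rw [hba]
    have h : a * (a * Real.exp (2 * x)) = (a * Real.exp x) ^ 2 := by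
      rw [show (2:ℝ)*x = x + x by ring, Real.exp_add]; ring
    rw [h, Real.sqrt_sq (by positivity)]
  have habs : |a - b| / Real.sqrt (a * b) = 2 * Real.sinh |x| := by
    rw [hsq, hba]
    have h2x : Real.exp (2 * x) = Real.exp x * Real.exp x := by
      rw [two_mul, Real.exp_add]
    have hfact : a - a * Real.exp (2 * x) = (a * Real.exp x) * (Real.exp (-x) - Real.exp x) := by
      rw [h2x, Real.exp_neg]
      field_simp
    rw [hfact, abs_mul, abs_of_pos (by positivity : (0:ℝ) < a * Real.exp x),
      mul_div_cancel_left₀ _ (by positivity : (a * Real.exp x) ≠ 0)]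
    have : Real.exp (-x) - Real.exp x = -(2 * Real.sinh x) := by
      rw [Real.sinh_eq]; ring
    rw [this, abs_neg, abs_mul, abs_two, Real.abs_sinh]
  rw [habs, hlog, abs_mul, abs_two]
  have := Real.self_le_sinh_iff.mpr (abs_nonneg x)
  linarith


/-- Hypercycle arc-length estimate (Proposition 6 of the paper).  In the upper
half-plane model, with the geodesic `A` being the positive imaginary axis, a
connected component of the hypercycle `C(t,A)` at distance `t > 0` from `A` is
the Euclidean ray `{s·e^{iθ} : s > 0}` where `cosh t · sin θ = 1`, `0 < θ ≤ π/2`.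
The induced path metric on the hypercycle between `z₁ = s₁·e^{iθ}` and
`z = s₂·e^{iθ}` equals `|log(s₂/s₁)|/sin θ`, and it is bounded above by
`2·sinh(d(z₁,z)/2)` where `d` is the hyperbolic distance. -/
theorem hypercycle_arc_le (t θ s₁ s₂ : ℝ) (ht : 0 < t)
    (hθ₀ : 0 < θ) (hθ₁ : θ ≤ Real.pi / 2)
    (hcos : Real.cosh t * Real.sin θ = 1)
    (hs₁ : 0 < s₁) (hs₂ : 0 < s₂)
    (z₁ z : ℂ)
    (hz₁ : z₁ = (s₁ : ℂ) * Complex.exp (θ * Complex.I))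
    (hz : z = (s₂ : ℂ) * Complex.exp (θ * Complex.I)) :
    |Real.log (s₂ / s₁)| / Real.sin θ ≤ 2 * Real.sinh (hdist2 z₁ z / 2) := by
  have hsin : 0 < Real.sin θ :=
    Real.sin_pos_of_pos_of_lt_pi hθ₀ (lt_of_le_of_lt hθ₁ (by linarith [Real.pi_pos]))
  have him1 : z₁.im = s₁ * Real.sin θ := by
    simp [hz₁, Complex.exp_mul_I, Complex.mul_im, Complex.sin_ofReal_re]
  have him2 : z.im = s₂ * Real.sin θ := by
    simp [hz, Complex.exp_mul_I, Complex.mul_im, Complex.sin_ofReal_re]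
  have habs : ‖z₁ - z‖ = |s₁ - s₂| := by
    rw [hz₁, hz, ← sub_mul, norm_mul, Complex.norm_exp_ofReal_mul_I, mul_one,
      ← Complex.ofReal_sub, Complex.norm_real, Real.norm_eq_abs]
  have hsqrt : Real.sqrt (z₁.im * z.im) = Real.sin θ * Real.sqrt (s₁ * s₂) := by
    rw [him1, him2, show s₁ * Real.sin θ * (s₂ * Real.sin θ)
        = Real.sin θ ^ 2 * (s₁ * s₂) by ring,
      Real.sqrt_mul (sq_nonneg _), Real.sqrt_sq hsin.le]
  have hRHS : 2 * Real.sinh (hdist2 z₁ z / 2)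
      = |s₁ - s₂| / (Real.sin θ * Real.sqrt (s₁ * s₂)) := by
    rw [hdist2, mul_div_cancel_left₀ _ (two_ne_zero), Real.sinh_arsinh, habs, hsqrt]
    have h : (0:ℝ) < Real.sin θ * Real.sqrt (s₁ * s₂) := by positivity
    field_simp
  rw [hRHS]
  have hk := key_ineq s₁ s₂ hs₁ hs₂
  rw [show |s₁ - s₂| / (Real.sin θ * Real.sqrt (s₁ * s₂))
      = (|s₁ - s₂| / Real.sqrt (s₁ * s₂)) / Real.sin θ by
    rw [div_div]; ring_nf]
  gcongr
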